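/- The function F is well defined, continuous on [0,∞), and maps every dyadic rational in [0,∞) to a dyadic rational. -/

import Mathlib

/-- A real number is a dyadic rational if it has the form `m / 2^n`. -/
def IsDyadic (x : ℝ) : Prop := ∃ (m : ℤ) (n : ℕ), x = (m : ℝ) / 2 ^ n

/-- Affine interpolation on `[a,b]` with values `fa` at `a` and `fb` at `b`. -/
noncomputable def interp (a b fa fb x : ℝ) : ℝ := fa + (x - a) * (fb - fa) / (b - a)

/-- `kmin j = min { i : j + 1/2 < 2^i }`. -/
noncomputable def kmin (j : ℕ) : ℕ := sInf {i : ℕ | (j : ℝ) + 1 / 2 < 2 ^ i}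

/-- The specification of the function `F` of the paper: `F(j) = 0` for every `j ∈ ℕ`,
`F(j + 1/2) = 1/2 + 2^{-2^{k(j)}}`, and `F` is affine on each of `[j, j + 1/2]` and
`[j + 1/2, j + 1]`. -/
def SpecFF (F : ℝ → ℝ) : Prop :=
  (∀ j : ℕ, F (j : ℝ) = 0) ∧
  (∀ j : ℕ, F ((j : ℝ) + 1 / 2) = 1 / 2 + (2 : ℝ) ^ (-(2 ^ kmin j : ℤ))) ∧
  (∀ j : ℕ, ∀ x ∈ Set.Icc (j : ℝ) ((j : ℝ) + 1 / 2),
    F x = interp (j : ℝ) ((j : ℝ) + 1 / 2) (F (j : ℝ)) (F ((j : ℝ) + 1 / 2)) x) ∧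
  (∀ j : ℕ, ∀ x ∈ Set.Icc ((j : ℝ) + 1 / 2) ((j : ℝ) + 1),
    F x = interp ((j : ℝ) + 1 / 2) ((j : ℝ) + 1) (F ((j : ℝ) + 1 / 2)) (F ((j : ℝ) + 1)) x)

/-- `F` is well defined (a function satisfying the specification exists and is
uniquely determined on `[0,∞)`), continuous on `[0,∞)`, and maps every dyadic rational in
`[0,∞)` to a dyadic rational. -/
noncomputable def peak (j : ℕ) : ℝ := 1 / 2 + (2 : ℝ) ^ (-(2 ^ kmin j : ℤ))

noncomputable def myF (x : ℝ) : ℝ :=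
  if x ≤ (⌊x⌋ : ℝ) + 1 / 2 then 2 * (x - ⌊x⌋) * peak ⌊x⌋.toNat
  else 2 * ((⌊x⌋ : ℝ) + 1 - x) * peak ⌊x⌋.toNat

lemma interp_eval (a b fa fb x : ℝ) (h : b - a = 1 / 2) :
    interp a b fa fb x = fa + 2 * (x - a) * (fb - fa) := by
  unfold interp; rw [h]; ring

lemma floor_half (j : ℕ) : ⌊(j : ℝ) + 1 / 2⌋ = j := by
  rw [add_comm, Int.floor_add_natCast]; norm_num

lemma floor_in (j : ℕ) (x : ℝ) (h1 : (j : ℝ) ≤ x) (h2 : x < (j : ℝ) + 1) : ⌊x⌋ = j := by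
  rw [Int.floor_eq_iff] <;> push_cast <;> simp [h1, h2]

lemma myF_nat (j : ℕ) : myF (j : ℝ) = 0 := by
  unfold myF
  rw [Int.floor_natCast]
  simp

lemma myF_half (j : ℕ) : myF ((j : ℝ) + 1 / 2) = peak j := by
  unfold myF
  rw [floor_half]
  simp only [Int.cast_natCast, Int.toNat_natCast, if_pos (le_refl _)]
  ring

lemma myF_nat' (j : ℕ) : myF ((j : ℝ) + 1) = 0 := by
  have := myF_nat (j + 1); push_cast at this; exact this

lemma myF_spec : SpecFF myF := by
  refine ⟨myF_nat, fun j => by rw [myF_half]; rfl, ?_, ?_⟩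
  · intro j x ⟨h1, h2⟩
    have hf : ⌊x⌋ = (j : ℤ) := floor_in j x h1 (by linarith)
    rw [interp_eval _ _ _ _ _ (by ring), myF_nat, myF_half]
    unfold myF
    rw [hf]
    simp only [Int.cast_natCast, Int.toNat_natCast, if_pos h2]
    ring
  · intro j x ⟨h1, h2⟩
    rw [interp_eval _ _ _ _ _ (by ring), myF_half, myF_nat']
    rcases eq_or_lt_of_le h2 with h | h
    · rw [h, myF_nat']; ring
    · have hf : ⌊x⌋ = (j : ℤ) := floor_in j x (by linarith) h
      unfold myF
      rw [hf]
      simp only [Int.cast_natCast, Int.toNat_natCast]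
      rcases eq_or_lt_of_le h1 with h' | h'
      · rw [if_pos h'.symm.le, ← h']; ring
      · rw [if_neg (by linarith)]; ring

lemma spec_unique (F G : ℝ → ℝ) (hF : SpecFF F) (hG : SpecFF G) :
    Set.EqOn F G (Set.Ici 0) := by
  intro x hx
  have hx0 : (0 : ℝ) ≤ x := hx
  set j : ℕ := ⌊x⌋.toNat with hj
  have hjx : ((j : ℤ) : ℝ) = (⌊x⌋ : ℝ) := by
    rw [hj, Int.toNat_of_nonneg (Int.floor_nonneg.mpr hx0)]
  have h1 : (j : ℝ) ≤ x := by
    rw [show ((j : ℕ) : ℝ) = ((j : ℤ) : ℝ) by push_cast; ring, hjx]; exact Int.floor_le x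
  have h2 : x < (j : ℝ) + 1 := by
    rw [show ((j : ℕ) : ℝ) = ((j : ℤ) : ℝ) by push_cast; ring, hjx]; exact Int.lt_floor_add_one x
  rcases le_or_gt x ((j : ℝ) + 1 / 2) with h | h
  · rw [hF.2.2.1 j x ⟨h1, h⟩, hG.2.2.1 j x ⟨h1, h⟩, hF.1, hG.1, hF.2.1, hG.2.1]
  · have hF1 : F ((j : ℝ) + 1) = 0 := by have := hF.1 (j + 1); push_cast at this; exact this
    have hG1 : G ((j : ℝ) + 1) = 0 := by have := hG.1 (j + 1); push_cast at this; exact this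
    rw [hF.2.2.2 j x ⟨h.le, h2.le⟩, hG.2.2.2 j x ⟨h.le, h2.le⟩, hF.2.1, hG.2.1, hF1, hG1]

lemma cont_on_Icc (m : ℤ) : ContinuousOn myF (Set.Icc (m : ℝ) ((m : ℝ) + 1)) := by
  set p := peak m.toNat with hp
  have hg : Continuous (fun x : ℝ => if x ≤ (m : ℝ) + 1 / 2 then 2 * (x - m) * p
      else 2 * ((m : ℝ) + 1 - x) * p) := by
    apply Continuous.if_le (by continuity) (by continuity) continuous_id continuous_const
    intro x hx; simp only [id] at hx; rw [hx]; ring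
  apply hg.continuousOn.congr
  intro x ⟨hx1, hx2⟩
  rcases eq_or_lt_of_le hx2 with h | h
  · have hf : ⌊x⌋ = m + 1 := by rw [h, show (m : ℝ) + 1 = ((m + 1 : ℤ) : ℝ) by push_cast; ring,
      Int.floor_intCast]
    simp only [myF, hf]
    rw [if_pos (show x ≤ ((m + 1 : ℤ) : ℝ) + 1 / 2 by push_cast; linarith),
      if_neg (show ¬ x ≤ (m : ℝ) + 1 / 2 by push_cast; linarith)]
    rw [h]; push_cast; ring
  · have hf : ⌊x⌋ = m := by
      rw [Int.floor_eq_iff]; exact ⟨hx1, h⟩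
    simp only [myF, hf, hp]

lemma lf : LocallyFinite (fun m : ℤ => Set.Icc (m : ℝ) ((m : ℝ) + 1)) := by
  intro x
  refine ⟨Metric.ball x 1, Metric.ball_mem_nhds x one_pos, ?_⟩
  apply Set.Finite.subset (Set.finite_Icc (⌊x⌋ - 2) (⌊x⌋ + 2))
  rintro m ⟨y, ⟨hy1, hy2⟩, hy3⟩
  rw [Metric.mem_ball, Real.dist_eq, abs_sub_lt_iff] at hy3
  have hfl : (⌊x⌋ : ℝ) ≤ x := Int.floor_le x
  have hfu : x < (⌊x⌋ : ℝ) + 1 := Int.lt_floor_add_one x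
  constructor
  · have : ((⌊x⌋ - 2 : ℤ) : ℝ) < m := by push_cast; linarith
    exact_mod_cast this.le
  · have : (m : ℝ) < ((⌊x⌋ + 2 : ℤ) : ℝ) := by push_cast; linarith
    exact_mod_cast this.le

lemma myF_cont : Continuous myF := by
  apply lf.continuous
  · ext x
    simp only [Set.mem_iUnion, Set.mem_univ, iff_true]
    exact ⟨⌊x⌋, Int.floor_le x, (Int.lt_floor_add_one x).le⟩
  · exact fun m => isClosed_Icc
  · exact cont_on_Icc

lemma IsDyadic.add {x y : ℝ} (hx : IsDyadic x) (hy : IsDyadic y) : IsDyadic (x + y) := by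
  obtain ⟨m1, n1, rfl⟩ := hx; obtain ⟨m2, n2, rfl⟩ := hy
  refine ⟨m1 * 2 ^ n2 + m2 * 2 ^ n1, n1 + n2, ?_⟩
  rw [div_add_div _ _ (pow_ne_zero n1 (two_ne_zero)) (pow_ne_zero n2 (two_ne_zero)),
    div_eq_div_iff (by positivity) (by positivity)]
  push_cast
  ring

lemma IsDyadic.mul {x y : ℝ} (hx : IsDyadic x) (hy : IsDyadic y) : IsDyadic (x * y) := by
  obtain ⟨m1, n1, rfl⟩ := hx; obtain ⟨m2, n2, rfl⟩ := hy
  refine ⟨m1 * m2, n1 + n2, ?_⟩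
  rw [div_mul_div_comm, div_eq_div_iff (by positivity) (by positivity)]
  push_cast
  ring

lemma IsDyadic.neg {x : ℝ} (hx : IsDyadic x) : IsDyadic (-x) := by
  obtain ⟨m, n, rfl⟩ := hx
  exact ⟨-m, n, by push_cast; ring⟩

lemma IsDyadic.sub {x y : ℝ} (hx : IsDyadic x) (hy : IsDyadic y) : IsDyadic (x - y) := by
  rw [sub_eq_add_neg]; exact hx.add hy.neg

lemma isDyadic_int (m : ℤ) : IsDyadic (m : ℝ) := ⟨m, 0, by simp⟩

lemma isDyadic_peak (j : ℕ) : IsDyadic (peak j) := by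
  refine IsDyadic.add ⟨1, 1, by norm_num⟩ ⟨1, 2 ^ kmin j, ?_⟩
  rw [zpow_neg, show ((2 : ℤ) ^ kmin j) = ((2 ^ kmin j : ℕ) : ℤ) by push_cast; ring,
    zpow_natCast]
  push_cast
  rw [one_div]

lemma myF_dyadic (x : ℝ) (hx : IsDyadic x) : IsDyadic (myF x) := by
  unfold myF
  split_ifs
  · exact (IsDyadic.mul (IsDyadic.mul ⟨2, 0, by norm_num⟩ (hx.sub (isDyadic_int _)))
      (isDyadic_peak _))
  · exact (IsDyadic.mul (IsDyadic.mul ⟨2, 0, by norm_num⟩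
      (((isDyadic_int _).add ⟨1, 0, by norm_num⟩).sub hx)) (isDyadic_peak _))

theorem statement10 :
    ∃ F : ℝ → ℝ, SpecFF F ∧
      (∀ G : ℝ → ℝ, SpecFF G → Set.EqOn F G (Set.Ici 0)) ∧
      ContinuousOn F (Set.Ici 0) ∧
      (∀ x : ℝ, 0 ≤ x → IsDyadic x → IsDyadic (F x)) := by
  exact ⟨myF, myF_spec, fun G hG => spec_unique myF G myF_spec hG,
    myF_cont.continuousOn, fun x _ hx => myF_dyadic x hx⟩
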